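/- Let P be a d-dimensional reflexive polytope, v a root of P, and w a lattice point on the boundary of P with w ∉ F_v and w ≠ −v. Then ⟨η_v, w⟩ ≥ 0, the lattice point v + w lies on the boundary of P, and the lattice point (⟨η_v, w⟩ + 1)·v + w lies in the facet F_v. -/

import Mathlib

open Finset Set Pointwise

noncomputable section

/-- The standard pairing `⟨x, y⟩ = ∑ i, x i * y i` on `ℝ^d`. -/
def pairR {d : ℕ} (x y : Fin d → ℝ) : ℝ := ∑ i, x i * y i

/-- A point of `ℝ^d` is a lattice point if all its coordinates are integers. -/
def IsLatticePt {d : ℕ} (x : Fin d → ℝ) : Prop := ∀ i, ∃ n : ℤ, x i = (n : ℝ)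

/-- A lattice polytope: the convex hull of finitely many lattice points. -/
def IsLatticePolytope {d : ℕ} (P : Set (Fin d → ℝ)) : Prop :=
  ∃ V : Finset (Fin d → ℝ), (∀ x ∈ V, IsLatticePt x) ∧
    P = convexHull ℝ (V : Set (Fin d → ℝ))

/-- The dual polytope `P* = {y : ⟨x, y⟩ ≥ -1 for all x ∈ P}`. -/
def polarDual {d : ℕ} (P : Set (Fin d → ℝ)) : Set (Fin d → ℝ) :=
  {y | ∀ x ∈ P, -1 ≤ pairR x y}

/-- A reflexive polytope: a (full-dimensional) lattice polytope with `0` in its interior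
whose dual is again a lattice polytope. -/
def IsReflexive {d : ℕ} (P : Set (Fin d → ℝ)) : Prop :=
  IsLatticePolytope P ∧ (0 : Fin d → ℝ) ∈ interior P ∧ IsLatticePolytope (polarDual P)

/-- `F` is the facet of `P` with (unique) inner normal `η` normalized by `⟨η, F⟩ = -1`:
`F` is the part of `P` where the valid inequality `⟨η, ·⟩ ≥ -1` is tight, and `F` has
dimension `d - 1`. -/
def IsFacetNormal {d : ℕ} (P : Set (Fin d → ℝ)) (η : Fin d → ℝ)
    (F : Set (Fin d → ℝ)) : Prop :=
  (∀ x ∈ P, -1 ≤ pairR η x) ∧ F = {x ∈ P | pairR η x = -1} ∧ F.Nonempty ∧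
    Module.finrank ℝ (vectorSpan ℝ F) = d - 1

/-- `F` is a facet ((d-1)-dimensional face) of `P`. -/
def IsFacet {d : ℕ} (P F : Set (Fin d → ℝ)) : Prop := ∃ η, IsFacetNormal P η F

/-- A root of `P`: a lattice point in the relative interior of a facet of `P`. -/
def IsRoot {d : ℕ} (P : Set (Fin d → ℝ)) (m : Fin d → ℝ) : Prop :=
  IsLatticePt m ∧ ∃ F, IsFacet P F ∧ m ∈ intrinsicInterior ℝ F

/-- The facet `F_m` of `P` containing the root `m` in its relative interior
(for a root `m` there is exactly one such facet). -/
def rootFacet {d : ℕ} (P : Set (Fin d → ℝ)) (m : Fin d → ℝ) : Set (Fin d → ℝ) :=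
  ⋃₀ {F | IsFacet P F ∧ m ∈ intrinsicInterior ℝ F}

/-- The inner normal `η_m = η_{F_m}` of the facet of `P` containing the root `m`. -/
def rootNormal {d : ℕ} (P : Set (Fin d → ℝ)) (m : Fin d → ℝ) : Fin d → ℝ :=
  Classical.epsilon fun η => IsFacetNormal P η (rootFacet P m)

/-- The real extension of the `ℤ`-linear map on the lattice given by an integer matrix. -/
def intMatMap {d : ℕ} (A : Matrix (Fin d) (Fin d) ℤ) (x : Fin d → ℝ) : Fin d → ℝ :=
  (A.map (Int.cast : ℤ → ℝ)).mulVec x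

/-- `P` and `Q` are isomorphic as lattice polytopes: some `g ∈ GL_d(ℤ)` has real
extension mapping `P` onto `Q`. -/
def IsLatticeIso {d : ℕ} (P Q : Set (Fin d → ℝ)) : Prop :=
  ∃ A : Matrix (Fin d) (Fin d) ℤ, IsUnit A.det ∧ intMatMap A '' P = Q

end

section Aux
variable {d : ℕ}

lemma pairR_comm (x y : Fin d → ℝ) : pairR x y = pairR y x :=
  Finset.sum_congr rfl fun i _ => mul_comm _ _

/-- pairR as a linear map in the first variable. -/
def pairLl (y : Fin d → ℝ) : (Fin d → ℝ) →ₗ[ℝ] ℝ where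
  toFun x := pairR x y
  map_add' a b := by
    unfold pairR; rw [← Finset.sum_add_distrib]
    exact Finset.sum_congr rfl fun i _ => by simp [add_mul]
  map_smul' c a := by
    unfold pairR; simp only [smul_eq_mul, RingHom.id_apply, Finset.mul_sum]
    exact Finset.sum_congr rfl fun i _ => by simp [Pi.smul_apply]; ring

lemma pairLl_apply (y x : Fin d → ℝ) : pairLl y x = pairR x y := rfl

lemma pairR_add_left (a b x : Fin d → ℝ) : pairR (a + b) x = pairR a x + pairR b x :=
  (pairLl x).map_add a b

lemma pairR_sub_left (a b x : Fin d → ℝ) : pairR (a - b) x = pairR a x - pairR b x :=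
  (pairLl x).map_sub a b

lemma pairR_smul_left (c : ℝ) (a x : Fin d → ℝ) : pairR (c • a) x = c * pairR a x :=
  (pairLl x).map_smul c a

lemma pairR_add_right (x a b : Fin d → ℝ) : pairR x (a + b) = pairR x a + pairR x b := by
  rw [pairR_comm, pairR_add_left, pairR_comm a, pairR_comm b]

lemma pairR_smul_right (c : ℝ) (x a : Fin d → ℝ) : pairR x (c • a) = c * pairR x a := by
  rw [pairR_comm, pairR_smul_left, pairR_comm]

lemma pairR_int {x y : Fin d → ℝ} (hx : IsLatticePt x) (hy : IsLatticePt y) :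
    ∃ n : ℤ, pairR x y = (n : ℝ) := by
  choose nx hnx using hx
  choose ny hny using hy
  refine ⟨∑ i, nx i * ny i, ?_⟩
  unfold pairR
  push_cast
  exact Finset.sum_congr rfl fun i _ => by rw [hnx, hny]

lemma exists_pos_line_mem {F : Set (Fin d → ℝ)} {v x : Fin d → ℝ}
    (hv : v ∈ intrinsicInterior ℝ F) (hx : x ∈ F) :
    ∃ t : ℝ, 0 < t ∧ v + t • (v - x) ∈ F := by
  obtain ⟨v', hv', hvv⟩ := hv
  have hxs : x ∈ affineSpan ℝ F := subset_affineSpan ℝ F hx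
  have hmem : ∀ t : ℝ, (v' : Fin d → ℝ) + t • ((v' : Fin d → ℝ) - x) ∈ affineSpan ℝ F := by
    intro t
    have := (affineSpan ℝ F).smul_vsub_vadd_mem t v'.2 hxs v'.2
    simpa [vsub_eq_sub, vadd_eq_add, add_comm] using this
  set γ : ℝ → affineSpan ℝ F := fun t => ⟨(v' : Fin d → ℝ) + t • ((v' : Fin d → ℝ) - x), hmem t⟩
  have hγc : Continuous γ := by
    apply Continuous.subtype_mk
    exact continuous_const.add (continuous_id.smul continuous_const)
  have hγ0 : γ 0 = v' := by
    apply Subtype.ext; simp [γ]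
  have hopen : IsOpen (γ ⁻¹' interior ((↑) ⁻¹' F : Set (affineSpan ℝ F))) :=
    isOpen_interior.preimage hγc
  have h0 : (0 : ℝ) ∈ γ ⁻¹' interior ((↑) ⁻¹' F : Set (affineSpan ℝ F)) := by
    simp only [Set.mem_preimage, hγ0]; exact hv'
  obtain ⟨ε, hε, hball⟩ := Metric.isOpen_iff.mp hopen 0 h0
  refine ⟨ε / 2, by positivity, ?_⟩
  have : γ (ε / 2) ∈ interior ((↑) ⁻¹' F : Set (affineSpan ℝ F)) := by
    apply hball
    simp [Real.dist_eq, abs_of_pos, hε, half_lt_self hε]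
  have := interior_subset this
  simpa [γ, hvv] using this

lemma linearMap_vanish_vectorSpan {F : Set (Fin d → ℝ)} (G : (Fin d → ℝ) →ₗ[ℝ] ℝ) (c : ℝ)
    (h : ∀ x ∈ F, G x = c) : ∀ z ∈ vectorSpan ℝ F, G z = 0 := by
  intro z hz
  rw [vectorSpan_def] at hz
  induction hz using Submodule.span_induction with
  | mem w hw =>
    obtain ⟨a, ha, b, hb, rfl⟩ := hw
    show G (a -ᵥ b) = 0
    rw [vsub_eq_sub, map_sub, h a ha, h b hb, sub_self]
  | zero => simp
  | add a b _ _ ha hb => rw [map_add, ha, hb, add_zero]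
  | smul c' a _ ha => rw [map_smul, ha, smul_zero]

end Aux

section Aux2
variable {d : ℕ}

lemma facetNormal_uniq {P F : Set (Fin d → ℝ)} {η v y : Fin d → ℝ}
    (hF : IsFacetNormal P η F) (hv : v ∈ intrinsicInterior ℝ F)
    (hy : ∀ x ∈ P, -1 ≤ pairR y x) (hyv : pairR y v = -1) : y = η := by
  rcases Nat.eq_zero_or_pos d with hd | hd
  · subst hd; exact funext fun i => i.elim0
  obtain ⟨hηP, hFdef, hFne, hdim⟩ := hF
  have hvF : v ∈ F := intrinsicInterior_subset hv
  have hηv : pairR η v = -1 := by rw [hFdef] at hvF; exact hvF.2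
  have hvP : v ∈ F → v ∈ P := by intro h; rw [hFdef] at h; exact h.1
  -- g := pairR · (y - η) vanishes on F
  have hgv : pairR v (y - η) = 0 := by
    have : pairR v y = -1 := by rw [pairR_comm]; exact hyv
    have h2 : pairR v η = -1 := by rw [pairR_comm]; exact hηv
    rw [pairR_comm, pairR_sub_left, pairR_comm y, pairR_comm η, this, h2]; ring
  have hgnn : ∀ x ∈ F, 0 ≤ pairR x (y - η) := by
    intro x hx
    have hxP : x ∈ P := by rw [hFdef] at hx; exact hx.1
    have hxη : pairR η x = -1 := by rw [hFdef] at hx; exact hx.2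
    have := hy x hxP
    rw [pairR_comm, pairR_sub_left, pairR_comm y, pairR_comm η, hxη] at *
    linarith
  have hg0 : ∀ x ∈ F, pairR x (y - η) = 0 := by
    intro x hx
    obtain ⟨t, ht, hmem⟩ := exists_pos_line_mem hv hx
    have h1 := hgnn _ hmem
    rw [pairR_add_left, pairR_smul_left, pairR_sub_left, hgv] at h1
    have h2 := hgnn x hx
    nlinarith
  -- the linear map G
  set G := pairLl (y - η) with hG
  have hGW : ∀ z ∈ vectorSpan ℝ F, G z = 0 :=
    linearMap_vanish_vectorSpan G 0 (fun x hx => hg0 x hx)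
  -- v ∉ vectorSpan F
  have hηW : ∀ z ∈ vectorSpan ℝ F, pairLl η z = 0 := by
    apply linearMap_vanish_vectorSpan (pairLl η) (-1)
    intro x hx
    rw [pairLl_apply, pairR_comm]
    rw [hFdef] at hx; exact hx.2
  have hvW : v ∉ vectorSpan ℝ F := by
    intro h
    have := hηW v h
    rw [pairLl_apply, pairR_comm, hηv] at this
    norm_num at this
  -- sup is top
  set W := vectorSpan ℝ F with hW
  set W' := W ⊔ Submodule.span ℝ {v} with hW'
  have hvW' : v ∈ W' := Submodule.mem_sup_right (Submodule.mem_span_singleton_self v)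
  have hlt : W < W' := lt_of_le_of_ne le_sup_left (fun h => hvW (h ▸ hvW'))
  have hfr : Module.finrank ℝ W < Module.finrank ℝ W' := Submodule.finrank_lt_finrank_of_lt hlt
  have htop : W' = ⊤ := by
    apply Submodule.eq_top_of_finrank_eq
    rw [Module.finrank_fin_fun]
    have h1 : Module.finrank ℝ W' ≤ d := by
      have := Submodule.finrank_le W'
      rwa [Module.finrank_fin_fun] at this
    omega
  -- G vanishes everywhere
  have hGall : ∀ x : Fin d → ℝ, G x = 0 := by
    intro x
    have hx : x ∈ W' := htop ▸ Submodule.mem_top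
    obtain ⟨a, ha, b, hb, rfl⟩ := Submodule.mem_sup.mp hx
    obtain ⟨c, rfl⟩ := Submodule.mem_span_singleton.mp hb
    have hGv : G v = 0 := by rw [hG, pairLl_apply]; exact hgv
    rw [map_add, map_smul, hGW a ha, hGv, smul_zero, add_zero]
  -- conclude
  have : y - η = 0 := by
    funext i
    have := hGall (Pi.single i 1)
    rw [hG, pairLl_apply] at this
    unfold pairR at this
    simp only [Pi.single_apply] at this
    rw [Finset.sum_eq_single i] at this
    · simpa using this
    · intro b _ hb; simp [hb]
    · intro h; exact absurd (Finset.mem_univ i) h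
  have := sub_eq_zero.mp this
  exact this

lemma mem_of_polar {P : Set (Fin d → ℝ)} (hconv : Convex ℝ P)
    (hclosed : IsClosed P) (h0 : (0 : Fin d → ℝ) ∈ P) {z : Fin d → ℝ}
    (hz : ∀ y ∈ polarDual P, -1 ≤ pairR z y) : z ∈ P := by
  by_contra hzP
  obtain ⟨f, u, hfu, huz⟩ := geometric_hahn_banach_closed_point hconv hclosed hzP
  have hu : 0 < u := by have := hfu 0 h0; simpa using this
  set y : Fin d → ℝ := fun i => -(f fun j => if i = j then 1 else 0) / u with hy
  have key : ∀ x : Fin d → ℝ, pairR x y = -(f x) / u := by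
    intro x
    have hfx : f x = ∑ i, x i • f fun j => if i = j then 1 else 0 :=
      LinearMap.pi_apply_eq_sum_univ (f : (Fin d → ℝ) →ₗ[ℝ] ℝ) x
    simp only [smul_eq_mul] at hfx
    have h1 : pairR x y = ∑ i, -(x i * f fun j => if i = j then 1 else 0) / u := by
      unfold pairR
      apply Finset.sum_congr rfl
      intro i _
      show x i * y i = _
      rw [hy]
      ring
    rw [h1, ← Finset.sum_div, hfx, ← Finset.sum_neg_distrib]
  have hyP : y ∈ polarDual P := by
    intro x hx
    rw [key]
    have := hfu x hx
    rw [le_div_iff₀ hu]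
    linarith
  have := hz y hyP
  rw [key] at this
  rw [le_div_iff₀ hu] at this
  linarith

end Aux2

section Aux3
variable {d : ℕ}

lemma halfspace_convex (z : Fin d → ℝ) : Convex ℝ {y : Fin d → ℝ | -1 ≤ pairR z y} := by
  intro y₁ h₁ y₂ h₂ a b ha hb hab
  simp only [Set.mem_setOf_eq] at *
  rw [pairR_add_right, pairR_smul_right, pairR_smul_right]
  nlinarith

lemma interior_latticePt_eq_zero {P : Set (Fin d → ℝ)} (hP : IsReflexive P)
    {x : Fin d → ℝ} (hx : IsLatticePt x) (hxi : x ∈ interior P) : x = 0 := by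
  obtain ⟨⟨V, hVlat, hPV⟩, h0, V', hV'lat, hPD⟩ := hP
  by_contra hx0
  have hcomp : IsCompact P := hPV ▸ V.finite_toSet.isCompact_convexHull ℝ
  have hconv : Convex ℝ P := hPV ▸ convex_convexHull ℝ _
  have hclosed : IsClosed P := hcomp.isClosed
  obtain ⟨C, hC⟩ := hcomp.isBounded.exists_norm_le
  -- (1 + ε/2) • x ∈ P
  have hcont : Continuous fun c : ℝ => c • x := continuous_id.smul continuous_const
  have hopen : IsOpen ((fun c : ℝ => c • x) ⁻¹' interior P) := isOpen_interior.preimage hcont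
  have h1 : (1 : ℝ) ∈ (fun c : ℝ => c • x) ⁻¹' interior P := by
    simp only [Set.mem_preimage, one_smul]; exact hxi
  obtain ⟨ε, hε, hball⟩ := Metric.isOpen_iff.mp hopen 1 h1
  set c : ℝ := 1 + ε / 2 with hcdef
  have hc : c • x ∈ P := by
    apply interior_subset
    apply hball
    simp only [Metric.mem_ball, Real.dist_eq, hcdef]
    rw [add_sub_cancel_left, abs_of_pos (by positivity)]
    linarith
  -- pairR x y ≥ 0 for y ∈ V'
  have hnn : ∀ y ∈ (V' : Set (Fin d → ℝ)), 0 ≤ pairR x y := by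
    intro y hy
    have hyP : y ∈ polarDual P := hPD ▸ subset_convexHull ℝ _ hy
    have h2 := hyP _ hc
    rw [pairR_smul_left] at h2
    obtain ⟨n, hn⟩ := pairR_int hx (hV'lat y hy)
    rw [hn] at h2 ⊢
    by_contra hneg
    push_neg at hneg
    have hn0 : n < 0 := by exact_mod_cast hneg
    have hn1 : (n : ℝ) ≤ -1 := by
      have : n ≤ -1 := by omega
      exact_mod_cast this
    rw [hcdef] at h2
    nlinarith
  -- t • x ∈ P for all t ≥ 0
  have hall : ∀ t : ℝ, 0 ≤ t → t • x ∈ P := by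
    intro t ht
    apply mem_of_polar hconv hclosed (interior_subset h0)
    intro y hy
    rw [hPD] at hy
    refine convexHull_min ?_ (halfspace_convex (t • x)) hy
    intro y' hy'
    simp only [Set.mem_setOf_eq]
    rw [pairR_smul_left]
    have := hnn y' hy'
    nlinarith
  -- contradiction with boundedness
  have hxnorm : 0 < ‖x‖ := norm_pos_iff.mpr hx0
  set t : ℝ := (C + 1) / ‖x‖ with htdef
  have hC0 : 0 ≤ C := le_trans (norm_nonneg x) (hC x (interior_subset hxi))
  have ht : 0 ≤ t := by positivity
  have := hC _ (hall t ht)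
  rw [norm_smul, Real.norm_eq_abs, abs_of_nonneg ht, htdef, div_mul_cancel₀ _ (ne_of_gt hxnorm)] at this
  linarith

end Aux3

/-- Let `v` be a root of the reflexive polytope `P` (with facet `F_v` and normal `η_v`)
and `w` a lattice point on the boundary of `P` with `w ∉ F_v` and `w ≠ -v`. Then
`⟨η_v, w⟩ ≥ 0`, the lattice point `v + w` lies on the boundary of `P`, and
`(⟨η_v, w⟩ + 1)·v + w` lies in the facet `F_v`. -/
theorem stmt11 {d : ℕ} (P : Set (Fin d → ℝ)) (hP : IsReflexive P)
    (v : Fin d → ℝ) (hv : IsRoot P v)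
    (Fv : Set (Fin d → ℝ)) (ηv : Fin d → ℝ) (hFv : IsFacetNormal P ηv Fv)
    (hvFv : v ∈ intrinsicInterior ℝ Fv)
    (w : Fin d → ℝ) (hwlat : IsLatticePt w) (hw : w ∈ frontier P)
    (hwF : w ∉ Fv) (hwv : w ≠ -v) :
    0 ≤ pairR ηv w ∧ v + w ∈ frontier P ∧
      (pairR ηv w + 1) • v + w ∈ Fv := by
  have hP' := hP
  obtain ⟨⟨V, hVlat, hPV⟩, h0int, V', hV'lat, hPD⟩ := hP'
  have hconv : Convex ℝ P := hPV ▸ convex_convexHull ℝ _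
  have hclosed : IsClosed P := (hPV ▸ V.finite_toSet.isCompact_convexHull ℝ).isClosed
  have h0P : (0 : Fin d → ℝ) ∈ P := interior_subset h0int
  have hwP : w ∈ P := by
    have := frontier_subset_closure (s := P) hw
    rwa [hclosed.closure_eq] at this
  have hvF : v ∈ Fv := intrinsicInterior_subset hvFv
  have hvP : v ∈ P := by rw [hFv.2.1] at hvF; exact hvF.1
  have hηvv : pairR ηv v = -1 := by
    have h := hvF; rw [hFv.2.1] at h; exact h.2
  have hvlat : IsLatticePt v := hv.1
  have hηvpolar : ηv ∈ polarDual P := fun x hx => by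
    rw [pairR_comm]; exact hFv.1 x hx
  -- η_v is a lattice point
  have hηvlat : IsLatticePt ηv := by
    have hmem : ηv ∈ convexHull ℝ (V' : Set (Fin d → ℝ)) := hPD ▸ hηvpolar
    rw [Finset.convexHull_eq] at hmem
    obtain ⟨wt, hwt0, hwt1, hwtc⟩ := hmem
    rw [Finset.centerMass_eq_of_sum_1 _ _ hwt1] at hwtc
    have hsum : ∑ y ∈ V', wt y * pairR y v = -1 := by
      have h := congrArg (fun z => pairLl v z) hwtc
      simp only [map_sum, map_smul, smul_eq_mul, pairLl_apply, id_eq] at h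
      rw [h]; exact hηvv
    have hterm : ∀ y ∈ V', 0 ≤ wt y * (pairR y v + 1) := by
      intro y hy
      have hypolar : y ∈ polarDual P := hPD ▸ subset_convexHull ℝ _ hy
      have h1 : -1 ≤ pairR y v := by rw [pairR_comm]; exact hypolar v hvP
      have := hwt0 y hy
      nlinarith
    have hzero : ∑ y ∈ V', wt y * (pairR y v + 1) = 0 := by
      have hexp : ∑ y ∈ V', wt y * (pairR y v + 1)
          = (∑ y ∈ V', wt y * pairR y v) + ∑ y ∈ V', wt y := by
        rw [← Finset.sum_add_distrib]
        exact Finset.sum_congr rfl fun y _ => by ring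
      rw [hexp, hsum, hwt1]; ring
    have hallzero := (Finset.sum_eq_zero_iff_of_nonneg hterm).mp hzero
    obtain ⟨y₀, hy₀V, hy₀ne⟩ := Finset.exists_ne_zero_of_sum_ne_zero
      (f := wt) (s := V') (by rw [hwt1]; exact one_ne_zero)
    have hy₀v : pairR y₀ v = -1 := by
      have := hallzero y₀ hy₀V
      rcases mul_eq_zero.mp this with h | h
      · exact absurd h hy₀ne
      · linarith
    have hy₀polar : y₀ ∈ polarDual P := hPD ▸ subset_convexHull ℝ _ hy₀V
    have heq : y₀ = ηv := facetNormal_uniq hFv hvFv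
      (fun x hx => by rw [pairR_comm]; exact hy₀polar x hx) hy₀v
    exact heq ▸ hV'lat y₀ hy₀V
  -- claim 1
  obtain ⟨n, hn⟩ := pairR_int hηvlat hwlat
  have hkge : -1 ≤ pairR ηv w := hFv.1 w hwP
  have hkne : pairR ηv w ≠ -1 := fun h => hwF (by rw [hFv.2.1]; exact ⟨hwP, h⟩)
  have claim1 : 0 ≤ pairR ηv w := by
    rw [hn] at hkge hkne ⊢
    have h1 : (-1 : ℤ) ≤ n := by exact_mod_cast hkge
    have h2 : n ≠ -1 := by
      intro h; apply hkne; rw [h]; norm_num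
    have : (0 : ℤ) ≤ n := by omega
    exact_mod_cast this
  -- dichotomy for vertices of the dual
  have hdich : ∀ y ∈ (V' : Set (Fin d → ℝ)), y = ηv ∨ 0 ≤ pairR y v := by
    intro y hy
    have hypolar : y ∈ polarDual P := hPD ▸ subset_convexHull ℝ _ hy
    have h1 : -1 ≤ pairR y v := by rw [pairR_comm]; exact hypolar v hvP
    by_cases hcase : pairR y v = -1
    · exact Or.inl (facetNormal_uniq hFv hvFv
        (fun x hx => by rw [pairR_comm]; exact hypolar x hx) hcase)
    · right
      obtain ⟨m, hm⟩ := pairR_int (hV'lat y hy) hvlat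
      rw [hm] at h1 hcase ⊢
      have hm1 : (-1 : ℤ) ≤ m := by exact_mod_cast h1
      have hm2 : m ≠ -1 := by intro h; apply hcase; rw [h]; norm_num
      have : (0 : ℤ) ≤ m := by omega
      exact_mod_cast this
  -- general membership
  have hzmem : ∀ s : ℝ, 0 ≤ s → -1 ≤ -s + pairR ηv w → s • v + w ∈ P := by
    intro s hs hineq
    apply mem_of_polar hconv hclosed h0P
    intro y hy
    rw [hPD] at hy
    refine convexHull_min ?_ (halfspace_convex _) hy
    intro y' hy'
    simp only [Set.mem_setOf_eq]
    rw [pairR_add_left, pairR_smul_left]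
    rcases hdich y' hy' with rfl | hge
    · rw [pairR_comm v, hηvv, pairR_comm w]
      linarith
    · have hy'polar : y' ∈ polarDual P := hPD ▸ subset_convexHull ℝ _ hy'
      have h1 : -1 ≤ pairR w y' := hy'polar w hwP
      have h2 : 0 ≤ pairR v y' := by rw [pairR_comm]; exact hge
      nlinarith
  -- z := (k+1) • v + w
  have hzP : (pairR ηv w + 1) • v + w ∈ P :=
    hzmem _ (by linarith) (by linarith)
  have hzFv : (pairR ηv w + 1) • v + w ∈ Fv := by
    rw [hFv.2.1]
    refine ⟨hzP, ?_⟩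
    rw [pairR_add_right, pairR_smul_right, hηvv]
    ring
  -- v + w
  have hvwP : v + w ∈ P := by
    have := hzmem 1 zero_le_one (by linarith)
    rwa [one_smul] at this
  have hvwlat : IsLatticePt (v + w) := by
    intro i
    obtain ⟨a, ha⟩ := hvlat i
    obtain ⟨b, hb⟩ := hwlat i
    exact ⟨a + b, by rw [Pi.add_apply, ha, hb]; push_cast; ring⟩
  have hvwfr : v + w ∈ frontier P := by
    rw [hclosed.frontier_eq]
    refine ⟨hvwP, fun hint => ?_⟩
    have h0 : v + w = 0 := interior_latticePt_eq_zero hP hvwlat hint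
    exact hwv (by linear_combination (norm := module) h0)
  exact ⟨claim1, hvwfr, hzFv⟩
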